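/- Let d, n, t be positive integers with d ≥ t ≥ 2 and n ≡ 1 (mod d). Let (c(k))_{k≥0} be a sequence of complex numbers such that c(k) = 0 for (n−1)/d < k < n, and such that c(ln+k) = c(ln)·c(k) for all nonnegative integers l and k with 0 ≤ k ≤ n−1. Then for all nonnegative integers l and all 0 ≤ k ≤ n−1: Σ_{k1+⋯+kt = ln+k} c(k1)⋯c(kt) = ( Σ_{k1+⋯+kt = k} c(k1)⋯c(kt) ) · Σ_{s1=0}^{l} c(s1 n) Σ_{s2=0}^{l−s1} c(s2 n) ⋯ Σ_{s_{t−1}=0}^{l−s1−⋯−s_{t−2}} c(s_{t−1} n) · c((l−s1−⋯−s_{t−1}) n), where all sums over k1,…,kt run over t-tuples of nonnegative integers with the indicated total. -/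
import Mathlib


/-!
STATEMENT 5 (Lemma 2.1, second part): If `d ≥ t ≥ 2`, `n ≡ 1 (mod d)`,
`c(k) = 0` for `(n-1)/d < k < n`, and `c(ln+k) = c(ln)·c(k)` for all `l ≥ 0` and
`0 ≤ k ≤ n-1`, then for all `l ≥ 0` and `0 ≤ k ≤ n-1`,
`∑_{k1+⋯+kt = ln+k} c(k1)⋯c(kt)
  = (∑_{k1+⋯+kt = k} c(k1)⋯c(kt)) · ∑_{s1+⋯+st = l} c(s1 n)⋯c(st n)`,
the last factor being the nested sum
`∑_{s1=0}^{l} c(s1 n) ∑_{s2=0}^{l-s1} c(s2 n) ⋯ c((l-s1-⋯-s_{t-1}) n)`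
written as a sum over `t`-tuples of nonnegative integers with total `l`.
-/

open Finset

theorem sum_tuples_multiplicative (d n t : ℕ) (hd : 0 < d) (hn : 0 < n)
    (ht : 2 ≤ t) (htd : t ≤ d) (hmod : n % d = 1)
    (c : ℕ → ℂ) (hc : ∀ k, (n - 1) / d < k → k < n → c k = 0)
    (hmul : ∀ l k : ℕ, k ≤ n - 1 → c (l * n + k) = c (l * n) * c k)
    (l k : ℕ) (hk : k ≤ n - 1) :
    (∑ f ∈ (Fintype.piFinset fun _ : Fin t => Finset.range (l * n + k + 1)).filter
        (fun f => ∑ i, f i = l * n + k), ∏ i, c (f i)) =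
      (∑ f ∈ (Fintype.piFinset fun _ : Fin t => Finset.range (k + 1)).filter
          (fun f => ∑ i, f i = k), ∏ i, c (f i)) *
        (∑ s ∈ (Fintype.piFinset fun _ : Fin t => Finset.range (l + 1)).filter
            (fun s => ∑ i, s i = l), ∏ i, c (s i * n)) := by
  classical
  set m := (n - 1) / d with hmdef
  have hdvd : d ∣ n - 1 := ⟨n / d, by have := Nat.div_add_mod n d; omega⟩
  have hdm : d * m = n - 1 := Nat.mul_div_cancel' hdvd
  have htm : t * m ≤ n - 1 := hdm ▸ Nat.mul_le_mul_right m htd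
  have hmn : m < n := by
    have : m ≤ d * m := Nat.le_mul_of_pos_left m hd
    omega
  have hkn : k < n := by omega
  -- key decomposition of a sum of t naturals
  have key : ∀ f : Fin t → ℕ, ∑ i, f i = n * (∑ i, f i / n) + (∑ i, f i % n) := by
    intro f
    rw [Finset.mul_sum, ← Finset.sum_add_distrib]
    exact Finset.sum_congr rfl fun i _ => (Nat.div_add_mod (f i) n).symm
  have huniq : ∀ Q R : ℕ, n * Q + R = n * l + k → R < n → Q = l ∧ R = k := by
    intro Q R h hR
    constructor
    · have h1 : (n * Q + R) / n = Q := by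
        rw [Nat.mul_add_div hn, Nat.div_eq_of_lt hR, add_zero]
      have h2 : (n * l + k) / n = l := by
        rw [Nat.mul_add_div hn, Nat.div_eq_of_lt hkn, add_zero]
      rw [← h1, h, h2]
    · have h1 : (n * Q + R) % n = R := by rw [Nat.mul_add_mod, Nat.mod_eq_of_lt hR]
      have h2 : (n * l + k) % n = k := by rw [Nat.mul_add_mod, Nat.mod_eq_of_lt hkn]
      rw [← h1, h, h2]
  set A := (Fintype.piFinset fun _ : Fin t => Finset.range (l * n + k + 1)).filter
      (fun f => ∑ i, f i = l * n + k) with hA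
  set B := (Fintype.piFinset fun _ : Fin t => Finset.range (k + 1)).filter
      (fun f => ∑ i, f i = k) with hB
  set C := (Fintype.piFinset fun _ : Fin t => Finset.range (l + 1)).filter
      (fun s => ∑ i, s i = l) with hC
  -- RHS as a sum over pairs
  rw [Finset.sum_mul_sum, ← Finset.sum_product']
  -- split RHS by the condition ∀ i, p.1 i ≤ m
  rw [← Finset.sum_filter_add_sum_filter_not (B ×ˢ C) (fun p => ∀ i, p.1 i ≤ m)]
  have hzero2 : (∑ p ∈ (B ×ˢ C).filter (fun p => ¬ ∀ i, p.1 i ≤ m),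
      (∏ i, c (p.1 i)) * ∏ i, c (p.2 i * n)) = 0 := by
    apply Finset.sum_eq_zero
    intro p hp
    rw [Finset.mem_filter] at hp
    obtain ⟨hpBC, hbad⟩ := hp
    push_neg at hbad
    obtain ⟨i, hi⟩ := hbad
    have hpB : p.1 ∈ B := (Finset.mem_product.mp hpBC).1
    rw [hB, Finset.mem_filter, Fintype.mem_piFinset] at hpB
    have h1 : p.1 i < n := by
      have := hpB.1 i
      rw [Finset.mem_range] at this
      omega
    have h0 : c (p.1 i) = 0 := hc _ (by omega) h1
    rw [Finset.prod_eq_zero (Finset.mem_univ i) h0, zero_mul]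
  rw [hzero2, add_zero]
  -- split LHS by the condition ∀ i, f i % n ≤ m
  rw [← Finset.sum_filter_add_sum_filter_not A (fun f => ∀ i, f i % n ≤ m)]
  have hzero1 : (∑ f ∈ A.filter (fun f => ¬ ∀ i, f i % n ≤ m), ∏ i, c (f i)) = 0 := by
    apply Finset.sum_eq_zero
    intro f hf
    rw [Finset.mem_filter] at hf
    push_neg at hf
    obtain ⟨_, i, hi⟩ := hf
    have h0 : c (f i) = 0 := by
      have hd1 : f i = f i / n * n + f i % n := by
        rw [mul_comm]; exact (Nat.div_add_mod (f i) n).symm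
      rw [hd1, hmul _ _ (by have := Nat.mod_lt (f i) hn; omega),
        hc _ (by omega) (Nat.mod_lt (f i) hn), mul_zero]
    rw [Finset.prod_eq_zero (Finset.mem_univ i) h0]
  rw [hzero1, add_zero]
  -- bijection
  refine Finset.sum_nbij' (i := fun f => (fun i => f i % n, fun i => f i / n))
    (j := fun p => fun i => p.2 i * n + p.1 i) ?_ ?_ ?_ ?_ ?_
  · intro f hf
    rw [Finset.mem_filter] at hf
    obtain ⟨hfA, hP⟩ := hf
    rw [hA, Finset.mem_filter] at hfA
    have hsum := hfA.2
    have hRle : (∑ i, f i % n) ≤ t * m := by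
      calc (∑ i, f i % n) ≤ ∑ _i : Fin t, m := Finset.sum_le_sum fun i _ => hP i
      _ = t * m := by simp [Finset.sum_const, Finset.card_univ, mul_comm]
    have heq : n * (∑ i, f i / n) + (∑ i, f i % n) = n * l + k := by
      rw [← key f, hsum]; ring
    obtain ⟨hQ, hR⟩ := huniq _ _ heq (by omega)
    rw [Finset.mem_filter, Finset.mem_product]
    refine ⟨⟨?_, ?_⟩, fun i => hP i⟩
    · rw [hB, Finset.mem_filter, Fintype.mem_piFinset]
      refine ⟨fun i => ?_, hR⟩
      rw [Finset.mem_range, Nat.lt_succ_iff, ← hR]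
      exact Finset.single_le_sum (fun j _ => Nat.zero_le _) (Finset.mem_univ i)
    · rw [hC, Finset.mem_filter, Fintype.mem_piFinset]
      refine ⟨fun i => ?_, hQ⟩
      rw [Finset.mem_range, Nat.lt_succ_iff, ← hQ]
      exact Finset.single_le_sum (fun j _ => Nat.zero_le _) (Finset.mem_univ i)
  · intro p hp
    rw [Finset.mem_filter, Finset.mem_product] at hp
    obtain ⟨⟨hpB, hpC⟩, hple⟩ := hp
    rw [hB, Finset.mem_filter, Fintype.mem_piFinset] at hpB
    rw [hC, Finset.mem_filter, Fintype.mem_piFinset] at hpC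
    have hsum : (∑ i, (p.2 i * n + p.1 i)) = l * n + k := by
      rw [Finset.sum_add_distrib, ← Finset.sum_mul, hpB.2, hpC.2]
    rw [Finset.mem_filter]
    constructor
    · rw [hA, Finset.mem_filter, Fintype.mem_piFinset]
      refine ⟨fun i => ?_, hsum⟩
      show p.2 i * n + p.1 i ∈ Finset.range (l * n + k + 1)
      rw [Finset.mem_range, Nat.lt_succ_iff, ← hsum]
      exact Finset.single_le_sum (f := fun j => p.2 j * n + p.1 j)
        (fun j _ => Nat.zero_le _) (Finset.mem_univ i)
    · intro i
      have hg : p.1 i < n := by have := hple i; omega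
      show (p.2 i * n + p.1 i) % n ≤ m
      rw [add_comm, Nat.add_mul_mod_self_right, Nat.mod_eq_of_lt hg]
      exact hple i
  · intro f hf
    funext i
    show f i / n * n + f i % n = f i
    rw [mul_comm]
    exact Nat.div_add_mod (f i) n
  · intro p hp
    rw [Finset.mem_filter, Finset.mem_product] at hp
    obtain ⟨⟨hpB, hpC⟩, hple⟩ := hp
    have hg : ∀ i, p.1 i < n := fun i => by have := hple i; omega
    refine Prod.ext (funext fun i => ?_) (funext fun i => ?_)
    · show (p.2 i * n + p.1 i) % n = p.1 i
      rw [add_comm, Nat.add_mul_mod_self_right, Nat.mod_eq_of_lt (hg i)]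
    · show (p.2 i * n + p.1 i) / n = p.2 i
      rw [add_comm, Nat.add_mul_div_right _ _ hn, Nat.div_eq_of_lt (hg i), zero_add]
  · intro f hf
    show (∏ i, c (f i)) = (∏ i, c (f i % n)) * ∏ i, c (f i / n * n)
    have hterm : ∀ i, c (f i) = c (f i % n) * c (f i / n * n) := by
      intro i
      have hd1 : f i = f i / n * n + f i % n := by
        rw [mul_comm]; exact (Nat.div_add_mod (f i) n).symm
      rw [mul_comm]
      conv_lhs => rw [hd1]
      exact hmul _ _ (by have := Nat.mod_lt (f i) hn; omega)
    rw [← Finset.prod_mul_distrib]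
    exact Finset.prod_congr rfl fun i _ => hterm i
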